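/- Let n > 3. For every permutation π of {1,…,n} and every transposition τ, the permutations π and π∘τ lie in the same connected component of the graph G_n. -/

import Mathlib

/-- The graph `G_n` on permutations of `{1, …, n}`, with an edge between `λ` and `ν`
iff `λ i ≠ ν i` for every `i`. -/
def derangementGraph (n : ℕ) : SimpleGraph (Equiv.Perm (Fin n)) where
  Adj lam nu := lam ≠ nu ∧ ∀ i, lam i ≠ nu i
  symm := ⟨fun _ _ h => ⟨h.1.symm, fun i => (h.2 i).symm⟩⟩
  loopless := ⟨fun _ h => h.1 rfl⟩

/-- For `n > 3`, a permutation `π` and its composition with any transposition `τ` lie in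
the same connected component of the graph `G_n`. -/
theorem reachable_mul_swap (n : ℕ) (hn : 3 < n)
    (π τ : Equiv.Perm (Fin n)) (hτ : τ.IsSwap) :
    (derangementGraph n).Reachable π (π * τ) := by
  haveI : NeZero n := ⟨by omega⟩
  obtain ⟨a, b, hab, rfl⟩ := hτ
  have h1 : ((1 : Fin n) : Fin n).val = 1 := by
    have : (1 : Fin n).val = 1 % n := Fin.val_one' n
    rw [this]; exact Nat.mod_eq_of_lt (by omega)
  have h2 : ((2 : Fin n) : Fin n).val = 2 := by
    rw [show (2 : Fin n) = 1 + 1 by ext; simp [Fin.val_add], Fin.val_add, h1]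
    exact Nat.mod_eq_of_lt (by omega)
  have h3 : ((3 : Fin n) : Fin n).val = 3 := by
    rw [show (3 : Fin n) = 2 + 1 by ext; simp [Fin.val_add], Fin.val_add, h1, h2]
    exact Nat.mod_eq_of_lt (by omega)
  have h10 : (1 : Fin n) ≠ 0 := by
    intro h; have := congrArg Fin.val h; simp [h1] at this; omega
  have h20 : (2 : Fin n) ≠ 0 := by
    intro h; have := congrArg Fin.val h; simp [h2] at this; rw [Nat.mod_eq_of_lt (by omega)] at this; omega
  have h30 : (3 : Fin n) ≠ 0 := by
    intro h; have := congrArg Fin.val h; simp [h3] at this; rw [Nat.mod_eq_of_lt (by omega)] at this; omega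
  have h21 : (2 : Fin n) ≠ 1 := by
    intro h; have := congrArg Fin.val h; rw [h2, h1] at this; omega
  set k : Fin n := if b = a + 1 ∨ a = b + 1 then 2 else 1 with hk
  have hk0 : k ≠ 0 := by
    rw [hk]; split <;> assumption
  have hka : a + k ≠ b := by
    rw [hk]; split
    · rename_i h; rcases h with h | h
      · subst h; intro h'
        exact h21 (add_left_cancel h')
      · subst h; intro h'
        have : b + 3 = b + 0 := by
          calc b + 3 = b + 1 + 2 := by rw [add_assoc]; congr 1; ext; rw [Fin.val_add, h1, h2, h3]; exact (Nat.mod_eq_of_lt (by omega)).symm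
          _ = b := h'
          _ = b + 0 := (add_zero b).symm
        exact h30 (add_left_cancel this)
    · rename_i h
      intro h'; exact h (Or.inl h'.symm)
  have hkb : b + k ≠ a := by
    rw [hk]; split
    · rename_i h; rcases h with h | h
      · subst h; intro h'
        have : a + 3 = a + 0 := by
          calc a + 3 = a + 1 + 2 := by rw [add_assoc]; congr 1; ext; rw [Fin.val_add, h1, h2, h3]; exact (Nat.mod_eq_of_lt (by omega)).symm
          _ = a := h'
          _ = a + 0 := (add_zero a).symm
        exact h30 (add_left_cancel this)
      · subst h; intro h'
        exact h21 (add_left_cancel h')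
    · rename_i h
      intro h'; exact h (Or.inr h'.symm)
  set σ : Equiv.Perm (Fin n) := Equiv.addRight k with hσ
  have hσapp : ∀ x : Fin n, σ x = x + k := fun x => rfl
  have adj1 : (derangementGraph n).Adj π (π * σ) := by
    refine And.intro ?_ ?_
    · intro h
      have : σ = 1 := by
        have h' : π * 1 = π * σ := by rw [mul_one]; exact h
        exact (mul_left_cancel h').symm
      have := congrArg (fun e => (e : Equiv.Perm (Fin n)) 0) this
      simp [hσapp] at this
      exact hk0 this
    · intro i
      simp only [Equiv.Perm.mul_apply]
      intro h
      have := π.injective h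
      rw [hσapp] at this
      exact hk0 (by
        have : i + 0 = i + k := by rw [add_zero]; exact this
        exact (add_left_cancel this).symm)
  have adj2 : (derangementGraph n).Adj (π * σ) (π * Equiv.swap a b) := by
    refine And.intro ?_ ?_
    · intro h
      have hs : σ = Equiv.swap a b := mul_left_cancel h
      have := congrArg (fun e => (e : Equiv.Perm (Fin n)) a) hs
      simp [hσapp, Equiv.swap_apply_left] at this
      exact hka this
    · intro i
      simp only [Equiv.Perm.mul_apply]
      intro h
      have h' := π.injective h
      rw [hσapp] at h'
      rcases eq_or_ne i a with rfl | hia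
      · rw [Equiv.swap_apply_left] at h'; exact hka h'
      rcases eq_or_ne i b with rfl | hib
      · rw [Equiv.swap_apply_right] at h'; exact hkb h'
      · rw [Equiv.swap_apply_of_ne_of_ne hia hib] at h'
        have : i + k = i + 0 := by rw [add_zero]; exact h'
        exact hk0 (add_left_cancel this)
  exact adj1.reachable.trans adj2.reachable
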